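/- For every r ≥ 2 and every r-uniform hypergraph H whose girth is greater than e (i.e., H contains no Berge cycle of length at most e), every set of e edges of H spans more than (r−1)e vertices; hence H contains no ((r−1)e, e)-configuration. -/

import Mathlib

open Finset

/-- A hypergraph with edge set `edges` has a Berge cycle of length `k`: distinct vertices
`v₁, …, v_k` and distinct edges `e₁, …, e_k` with `vᵢ, vᵢ₊₁ ∈ eᵢ` (indices mod `k`). -/
def HasBergeCycle {V : Type*} (edges : Finset (Finset V)) (k : ℕ) : Prop :=
  ∃ (v : ZMod k → V) (f : ZMod k → Finset V),
    Function.Injective v ∧ Function.Injective f ∧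
    (∀ i, f i ∈ edges) ∧ (∀ i, v i ∈ f i) ∧ (∀ i, v (i + 1) ∈ f i)

lemma hasBergeCycle_of_seq {V : Type*} (edges : Finset (Finset V)) (k : ℕ) (hk : 2 ≤ k)
    (w : ℕ → V) (g : ℕ → Finset V)
    (hwinj : ∀ i j, i < k → j < k → w i = w j → i = j)
    (hginj : ∀ i j, i < k → j < k → g i = g j → i = j)
    (hmem : ∀ i < k, g i ∈ edges)
    (h1 : ∀ i < k, w i ∈ g i)
    (h2 : ∀ i, i + 1 < k → w (i + 1) ∈ g i)
    (h3 : w 0 ∈ g (k - 1)) : HasBergeCycle edges k := by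
  haveI : NeZero k := ⟨by omega⟩
  haveI : Fact (1 < k) := ⟨by omega⟩
  refine ⟨fun i => w i.val, fun i => g i.val, ?_, ?_, ?_, ?_, ?_⟩
  · intro i j hij
    exact ZMod.val_injective k (hwinj _ _ (ZMod.val_lt i) (ZMod.val_lt j) hij)
  · intro i j hij
    exact ZMod.val_injective k (hginj _ _ (ZMod.val_lt i) (ZMod.val_lt j) hij)
  · intro i; exact hmem _ (ZMod.val_lt i)
  · intro i; exact h1 _ (ZMod.val_lt i)
  · intro i
    have hv : (i + 1).val = (i.val + 1) % k := by rw [ZMod.val_add, ZMod.val_one]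
    by_cases hc : i.val + 1 < k
    · have h' : (i + 1).val = i.val + 1 := by rw [hv, Nat.mod_eq_of_lt hc]
      show w (i + 1).val ∈ g i.val
      rw [h']; exact h2 i.val hc
    · have hlt := ZMod.val_lt i
      have hik : i.val = k - 1 := by omega
      have h' : (i + 1).val = 0 := by
        rw [hv, hik, Nat.sub_add_cancel (by omega), Nat.mod_self]
      show w (i + 1).val ∈ g i.val
      rw [h', hik]; exact h3

lemma exists_sparse_edge {V : Type*} [DecidableEq V] (e : ℕ)
    (edges E' : Finset (Finset V)) (hsub : E' ⊆ edges) (hne : E'.Nonempty)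
    (hcard : E'.card ≤ e)
    (hgirth : ∀ k, 2 ≤ k → k ≤ e → ¬ HasBergeCycle edges k) :
    ∃ F ∈ E', (((E'.erase F).biUnion id) ∩ F).card ≤ 1 := by
  by_contra hcon
  push_neg at hcon
  obtain ⟨F₀, hF₀⟩ := hne
  have hpos : 0 < (((E'.erase F₀).biUnion id) ∩ F₀).card := by
    have := hcon F₀ hF₀; omega
  obtain ⟨x, hx⟩ := Finset.card_pos.mp hpos
  set P : ℕ → Prop := fun t => ∃ (f : ℕ → Finset V) (v : ℕ → V),
      (∀ i ≤ t, f i ∈ E') ∧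
      (∀ i j, i ≤ t → j ≤ t → f i = f j → i = j) ∧
      (∀ i j, i < t → j < t → v i = v j → i = j) ∧
      (∀ i < t, v i ∈ f i ∧ v i ∈ f (i + 1)) with hP
  have hP0 : P 0 := by
    refine ⟨fun _ => F₀, fun _ => x, fun i hi => hF₀, ?_, ?_, ?_⟩ <;> intros <;> omega
  have hbound : ∀ t, P t → t + 1 ≤ E'.card := by
    rintro t ⟨f, v, hfE, hfinj, -, -⟩
    have : ((Finset.range (t + 1)).image f).card = t + 1 := by
      rw [Finset.card_image_of_injOn, Finset.card_range]
      intro i hi j hj hij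
      exact hfinj i j (by simpa using Nat.lt_succ_iff.mp (Finset.mem_range.mp hi))
        (by simpa using Nat.lt_succ_iff.mp (Finset.mem_range.mp hj)) hij
    calc t + 1 = ((Finset.range (t + 1)).image f).card := this.symm
      _ ≤ E'.card := Finset.card_le_card (by
          intro F hF
          obtain ⟨i, hi, rfl⟩ := Finset.mem_image.mp hF
          exact hfE i (Nat.lt_succ_iff.mp (Finset.mem_range.mp hi)))
  have hstep : ∃ t, P t ∧ ¬ P (t + 1) := by
    by_contra h
    push_neg at h
    have hall : ∀ n, P n := fun n => Nat.rec hP0 (fun n ih => h n ih) n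
    have := hbound E'.card (hall E'.card)
    omega
  obtain ⟨t, hPt, hmax⟩ := hstep
  obtain ⟨f, v, hfE, hfinj, hvinj, hvf⟩ := hPt
  have ht : t + 1 ≤ E'.card := hbound t ⟨f, v, hfE, hfinj, hvinj, hvf⟩
  set F := f t with hF
  have hFE : F ∈ E' := hfE t le_rfl
  have h2 := hcon F hFE
  by_cases hA : ∃ u ∈ (E'.erase F).biUnion id ∩ F, ∀ i < t, v i ≠ u
  · obtain ⟨u, hu, hunew⟩ := hA
    rw [Finset.mem_inter, Finset.mem_biUnion] at hu
    obtain ⟨⟨g, hg, hug⟩, huF⟩ := hu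
    simp only [id] at hug
    by_cases hB : ∃ j ≤ t, f j = g
    · -- close a cycle of length t - j + 1
      obtain ⟨j, hj, hfj⟩ := hB
      have hgne : g ≠ F := (Finset.mem_erase.mp hg).1
      have hjlt : j < t := lt_of_le_of_ne hj (fun h => hgne (by rw [← hfj, h]))
      set k := t - j + 1 with hk
      refine hgirth k (by omega) (by omega) ?_
      refine hasBergeCycle_of_seq edges k (by omega)
        (fun i => Nat.casesOn i u (fun i' => v (j + i'))) (fun i => f (j + i))
        ?_ ?_ ?_ ?_ ?_ ?_
      · rintro (_ | i) (_ | j') hi hj' hw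
        · rfl
        · exact absurd hw.symm (hunew (j + j') (by omega))
        · exact absurd hw (hunew (j + i) (by omega))
        · have := hvinj (j + i) (j + j') (by omega) (by omega) hw
          omega
      · intro i j' hi hj' hg'
        have := hfinj (j + i) (j + j') (by omega) (by omega) hg'
        omega
      · intro i hi; exact hsub (hfE (j + i) (by omega))
      · rintro (_ | i) hi
        · show u ∈ f (j + 0)
          rw [Nat.add_zero, hfj]; exact hug
        · exact (hvf (j + i) (by omega)).2
      · intro i hi
        exact (hvf (j + i) (by omega)).1
      · have hjk : j + (k - 1) = t := by omega
        show u ∈ f (j + (k - 1))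
        rw [hjk]; exact huF
    · -- extend the path: contradiction with maximality
      push_neg at hB
      refine hmax ⟨fun i => if i = t + 1 then g else f i, fun i => if i = t then u else v i,
        ?_, ?_, ?_, ?_⟩
      · intro i hi
        beta_reduce
        split_ifs with h'
        · exact Finset.mem_of_mem_erase hg
        · exact hfE i (by omega)
      · intro i j' hi hj' hij
        beta_reduce at hij
        split_ifs at hij with h1 h2 h2
        · omega
        · exact absurd hij.symm (hB j' (by omega))
        · exact absurd hij (hB i (by omega))
        · exact hfinj i j' (by omega) (by omega) hij
      · intro i j' hi hj' hij
        beta_reduce at hij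
        split_ifs at hij with h1 h2 h2
        · omega
        · exact absurd hij.symm (hunew j' (by omega))
        · exact absurd hij (hunew i (by omega))
        · exact hvinj i j' (by omega) (by omega) hij
      · intro i hi
        beta_reduce
        by_cases h' : i = t
        · constructor
          · rw [if_pos h', if_neg (show i ≠ t + 1 by omega)]
            rw [h']; exact huF
          · rw [if_pos h', if_pos (show i + 1 = t + 1 by omega)]
            exact hug
        · rw [if_neg h', if_neg (show i ≠ t + 1 by omega),
            if_neg (show i + 1 ≠ t + 1 by omega)]
          exact hvf i (by omega)
  · -- all shared vertices are path vertices: two of them, take the earlier one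
    push_neg at hA
    obtain ⟨u₁, hu₁, u₂, hu₂, hne'⟩ := Finset.one_lt_card.mp h2
    obtain ⟨i₁, hi₁, hv₁⟩ := hA u₁ hu₁
    obtain ⟨i₂, hi₂, hv₂⟩ := hA u₂ hu₂
    have hii : i₁ ≠ i₂ := by
      rintro rfl; exact hne' (hv₁ ▸ hv₂ ▸ rfl)
    have hkey : ∃ j, j + 1 < t ∧ v j ∈ F := by
      rcases Nat.lt_or_ge i₁ i₂ with h | h
      · exact ⟨i₁, by omega, hv₁ ▸ (Finset.mem_inter.mp hu₁).2⟩
      · exact ⟨i₂, by omega, hv₂ ▸ (Finset.mem_inter.mp hu₂).2⟩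
    obtain ⟨j, hjt, hvjF⟩ := hkey
    set k := t - j with hk
    refine hgirth k (by omega) (by omega) ?_
    refine hasBergeCycle_of_seq edges k (by omega)
      (fun i => v (j + i)) (fun i => f (j + i + 1)) ?_ ?_ ?_ ?_ ?_ ?_
    · intro i j' hi hj' hw
      have := hvinj (j + i) (j + j') (by omega) (by omega) hw
      omega
    · intro i j' hi hj' hg'
      have := hfinj (j + i + 1) (j + j' + 1) (by omega) (by omega) hg'
      omega
    · intro i hi; exact hsub (hfE (j + i + 1) (by omega))
    · intro i hi; exact (hvf (j + i) (by omega)).2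
    · intro i hi
      show v (j + (i + 1)) ∈ f (j + i + 1)
      have h' : j + (i + 1) = j + i + 1 := by omega
      rw [h']
      exact (hvf (j + i + 1) (by omega)).1
    · show v (j + 0) ∈ f (j + (k - 1) + 1)
      have h' : j + (k - 1) + 1 = t := by omega
      rw [h', Nat.add_zero]
      exact hvjF

/-- In an `r`-uniform hypergraph of girth greater than `e`, every set of `e` edges spans
more than `(r−1)e` vertices; i.e., there is no `((r−1)e, e)`-configuration. -/
theorem girth_gt_no_configuration {V : Type*} [DecidableEq V] (r e : ℕ)
    (hr : 2 ≤ r) (he : 1 ≤ e) (edges : Finset (Finset V))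
    (huniform : ∀ E ∈ edges, E.card = r)
    (hgirth : ∀ k, 2 ≤ k → k ≤ e → ¬ HasBergeCycle edges k) :
    ∀ E' ⊆ edges, E'.card = e → (r - 1) * e < (E'.biUnion id).card := by
  have main : ∀ m, 1 ≤ m → m ≤ e → ∀ E' ⊆ edges, E'.card = m →
      (r - 1) * m < (E'.biUnion id).card := by
    intro m
    induction m with
    | zero => omega
    | succ m ih =>
      intro h1 hle E' hsub hcard
      rcases Nat.eq_zero_or_pos m with rfl | hm
      · obtain ⟨F, rfl⟩ := Finset.card_eq_one.mp hcard
        have hF : F ∈ edges := hsub (Finset.mem_singleton_self F)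
        have : F.card = r := huniform F hF
        simp only [Finset.singleton_biUnion, id]
        omega
      · have hne : E'.Nonempty := Finset.card_pos.mp (by omega)
        obtain ⟨F, hFE, hsparse⟩ := exists_sparse_edge e edges E' hsub hne (by omega) hgirth
        set E'' := E'.erase F with hE''
        set U := E''.biUnion id with hU
        have hcard'' : E''.card = m := by
          rw [hE'', Finset.card_erase_of_mem hFE, hcard]; omega
        have ihU : (r - 1) * m < U.card :=
          ih hm (by omega) E'' (fun x hx => hsub (Finset.mem_of_mem_erase hx)) hcard''
        have hEins : E' = insert F E'' := (Finset.insert_erase hFE).symm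
        have hun : E'.biUnion id = F ∪ U := by
          rw [hEins, Finset.biUnion_insert]; rfl
        have hFcard : F.card = r := huniform F (hsub hFE)
        have hint : (F ∩ U).card ≤ 1 := by
          rw [Finset.inter_comm]; exact hsparse
        have hsd : (F \ U).card + (F ∩ U).card = F.card :=
          Finset.card_sdiff_add_card_inter F U
        have hcup : (F \ U).card + U.card = (F ∪ U).card := Finset.card_sdiff_add_card F U
        rw [hun, ← hcup]
        have : r - 1 ≤ (F \ U).card := by omega
        calc (r - 1) * (m + 1) = (r - 1) + (r - 1) * m := by ring
          _ < (F \ U).card + U.card := by omega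
  intro E' hsub hcard
  exact main e he le_rfl E' hsub hcard
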